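/- With F, φ, γ as above, for each generator x_i (0 ≤ i < q) one has φ(θ(x_i)) = ((j ↦ γ^j(x_i)), 1). Explicitly, φ(x_i x_{i+1} ⋯ x_{i-1}) is the element of the wreath product with trivial permutation and coordinates (x_i, x_{i+1}, …, x_{i-1}) (indices mod q). -/

import Mathlib

/-- The permutation action of `Equiv.Perm (Fin q)` on `Fin q → G` by permuting
coordinates, as a homomorphism to `MulAut`. -/
def permAut (q : ℕ) (G : Type*) [Group G] :
    Equiv.Perm (Fin q) →* MulAut (Fin q → G) where
  toFun σ :=
    { toFun := fun f => f ∘ σ.symm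
      invFun := fun f => f ∘ σ
      left_inv := fun f => by ext j; simp
      right_inv := fun f => by ext j; simp
      map_mul' := fun f g => rfl }
  map_one' := by ext f j; rfl
  map_mul' := fun σ τ => by ext f j; rfl

/-- The permutational wreath product `G ≀ Sym(Fin q)`. -/
abbrev Wreath (q : ℕ) (G : Type*) [Group G] :=
  (Fin q → G) ⋊[permAut q G] Equiv.Perm (Fin q)

/-- The Thue–Morse self-similarity decomposition
`φ : F → F ≀ Sym(Fin q)`, with `φ(x_0) = ⟨x_0,…,x_{q-1}⟩σ` and
`φ(x_i) = ⟨1,…,1⟩σ` for `i ≥ 1`, where `σ : j ↦ j + 1 (mod q)`. -/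
noncomputable def phiW (q : ℕ) [NeZero q] :
    FreeGroup (Fin q) →* Wreath q (FreeGroup (Fin q)) :=
  FreeGroup.lift fun i : Fin q =>
    ⟨if i = 0 then (fun j => FreeGroup.of j) else 1, Equiv.addRight (1 : Fin q)⟩

/-- The Thue–Morse substitution `θ` extended to the free group:
`θ(x_i) = x_i x_{i+1} ⋯ x_{i-1}`. -/
noncomputable def tmF (q : ℕ) [NeZero q] : FreeGroup (Fin q) →* FreeGroup (Fin q) :=
  FreeGroup.lift fun i : Fin q => (List.ofFn fun j : Fin q => FreeGroup.of (i + j)).prod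

/-- The automorphism `γ` of the free group permuting the generators cyclically,
`x_i ↦ x_{i+1 mod q}`. -/
noncomputable def cycF (q : ℕ) [NeZero q] : FreeGroup (Fin q) →* FreeGroup (Fin q) :=
  FreeGroup.lift fun i : Fin q => FreeGroup.of (i + 1)

open Fin.NatCast Fin.CommRing

lemma sigma_pow_apply (q : ℕ) [NeZero q] (n : ℕ) (k : Fin q) :
    ((Equiv.addRight (1 : Fin q)) ^ n) k = k + n := by
  induction n generalizing k with
  | zero => simp
  | succ n ih =>
      rw [pow_succ, Equiv.Perm.mul_apply, ih]
      simp [Equiv.addRight]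
      ring

lemma sigma_pow_symm_apply (q : ℕ) [NeZero q] (n : ℕ) (k : Fin q) :
    ((Equiv.addRight (1 : Fin q)) ^ n).symm k = k - n := by
  rw [Equiv.symm_apply_eq, sigma_pow_apply]
  ring

lemma cycF_iter (q : ℕ) [NeZero q] (n : ℕ) (i : Fin q) :
    (⇑(cycF q))^[n] (FreeGroup.of i) = FreeGroup.of (i + n) := by
  induction n with
  | zero => simp
  | succ n ih =>
      rw [Function.iterate_succ_apply', ih, cycF, FreeGroup.lift_apply_of]
      congr 1
      push_cast
      ring

lemma key (q : ℕ) [NeZero q] (i : Fin q) :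
    ∀ n ≤ q, phiW q (((List.range n).map
        (fun j : ℕ => FreeGroup.of (i + (j : Fin q)))).prod) =
      ⟨fun k : Fin q => if ((-i : Fin q) : ℕ) < n then FreeGroup.of (i + k) else 1,
        (Equiv.addRight (1 : Fin q)) ^ n⟩ := by
  intro n hn
  induction n with
  | zero => simp; rfl
  | succ n ih =>
      have hnq : n < q := hn
      rw [List.range_succ, List.map_append, List.prod_append, map_mul,
        ih (le_of_lt hnq)]
      simp only [List.map_cons, List.map_nil, List.prod_cons, List.prod_nil, mul_one]
      rw [phiW, FreeGroup.lift_apply_of]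
      have hmul : ∀ (a b : Fin q → FreeGroup (Fin q)) (s t : Equiv.Perm (Fin q)),
          (⟨a, s⟩ * ⟨b, t⟩ : Wreath q (FreeGroup (Fin q))) = ⟨a * (permAut q _ s b), s * t⟩ :=
        fun _ _ _ _ => rfl
      rw [hmul, ← pow_succ]
      congr 1
      have hval : ((n : Fin q) : ℕ) = n := by
        simp [Fin.val_natCast, Nat.mod_eq_of_lt hnq]
      by_cases h : i + (n : Fin q) = 0
      · have hr : ((-i : Fin q) : ℕ) = n := by
          have : (n : Fin q) = -i := by linear_combination h
          rw [← this, hval]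
        have hlt : ¬ ((-i : Fin q) : ℕ) < n := by omega
        funext k
        simp only [if_pos h, hr, hlt, if_false, Nat.lt_succ_self, if_pos, Pi.mul_apply]
        have : (permAut q (FreeGroup (Fin q)) ((Equiv.addRight (1 : Fin q)) ^ n)
            (fun j => FreeGroup.of j)) k = FreeGroup.of (k - n) := by
          show FreeGroup.of (((Equiv.addRight (1 : Fin q)) ^ n).symm k) = _
          rw [sigma_pow_symm_apply]
        rw [this]
        rw [if_neg (lt_irrefl n), one_mul]
        congr 1
        have : (n : Fin q) = -i := by linear_combination h
        rw [this]
        ring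
      · have hr : ((-i : Fin q) : ℕ) ≠ n := by
          intro he
          apply h
          have : (n : Fin q) = -i := by
            have := congrArg (fun m : ℕ => (m : Fin q)) he
            simpa using this.symm
          rw [this]; ring
        have hiff : (((-i : Fin q) : ℕ) < n + 1) ↔ (((-i : Fin q) : ℕ) < n) := by omega
        funext k
        simp only [if_neg h, map_one, Pi.mul_apply, Pi.one_apply, mul_one, hiff]

theorem stmt_5 (q : ℕ) [NeZero q] (hq : 2 ≤ q) (i : Fin q) :
    phiW q (tmF q (FreeGroup.of i)) =
      ⟨fun j : Fin q => (⇑(cycF q))^[(j : ℕ)] (FreeGroup.of i), 1⟩ ∧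
    phiW q ((List.ofFn fun j : Fin q => FreeGroup.of (i + j)).prod) =
      ⟨fun j : Fin q => FreeGroup.of (i + j), 1⟩ := by
  have hlist : (List.ofFn fun j : Fin q => FreeGroup.of (i + j)) =
      (List.range q).map (fun j : ℕ => FreeGroup.of (i + (j : Fin q))) := by
    rw [List.ofFn_eq_map, ← (show (List.finRange q).map Fin.val = List.range q from
      List.ext_getElem (by simp) (by simp)), List.map_map]
    congr 1
    funext j
    simp [Fin.cast_val_eq_self]
  have h2 : phiW q ((List.ofFn fun j : Fin q => FreeGroup.of (i + j)).prod) =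
      ⟨fun j : Fin q => FreeGroup.of (i + j), 1⟩ := by
    rw [hlist, key q i q le_rfl]
    have hlt : ((-i : Fin q) : ℕ) < q := (-i).isLt
    have hpow : (Equiv.addRight (1 : Fin q)) ^ q = 1 := by
      ext k
      rw [sigma_pow_apply]
      simp
    simp [hlt, hpow]
  refine ⟨?_, h2⟩
  have : tmF q (FreeGroup.of i) = (List.ofFn fun j : Fin q => FreeGroup.of (i + j)).prod := by
    rw [tmF, FreeGroup.lift_apply_of]
  rw [this, h2]
  congr 1
  funext j
  rw [cycF_iter, Fin.cast_val_eq_self]
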